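/- Let B: X → ℝ be a barrier certificate for a discrete-time stochastic system, i.e., B(x) ≥ 0 for all x ∈ X, B(x) ≤ γ for all x ∈ X₀, B(x) ≥ 1 for all x ∈ X_u, and E[B(f(x,w))] ≤ B(x) for all x ∈ X \ X_u, where 0 ≤ γ ≤ 1. Then for every initial state x₀ ∈ X₀, the probability that the solution process starting at x₀ never enters X_u is at least 1 − γ. -/

import Mathlib

open MeasureTheory Filter Topology


lemma aux_tendsto_ae_zero {Ω : Type*} [MeasurableSpace Ω] (μ : Measure Ω)
    (e : ℕ → Ω → ℝ) (hmeas : ∀ n, Measurable (e n))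
    (hnonneg : ∀ n, 0 ≤ᵐ[μ] e n)
    (hanti : ∀ᵐ ω ∂μ, ∀ n, e (n + 1) ω ≤ e n ω)
    (hint : ∀ n, Integrable (e n) μ)
    (hto : Tendsto (fun n => ∫ ω, e n ω ∂μ) atTop (𝓝 0)) :
    ∀ᵐ ω ∂μ, Tendsto (fun n => e n ω) atTop (𝓝 0) := by
  set I : Ω → ℝ := fun ω => ⨅ n, e n ω with hIdef
  have hImeas : Measurable I := Measurable.iInf hmeas
  have hae : ∀ᵐ ω ∂μ, (∀ n, 0 ≤ e n ω) ∧ ∀ n, e (n + 1) ω ≤ e n ω := by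
    filter_upwards [ae_all_iff.2 hnonneg, hanti] with ω h1 h2
    exact ⟨h1, h2⟩
  have key : ∀ ω, (∀ n, 0 ≤ e n ω) → (∀ n, e (n + 1) ω ≤ e n ω) →
      0 ≤ I ω ∧ (∀ n, I ω ≤ e n ω) ∧ Tendsto (fun n => e n ω) atTop (𝓝 (I ω)) := by
    intro ω h0 hsucc
    have hant : Antitone fun n => e n ω := antitone_nat_of_succ_le hsucc
    have hbd : BddBelow (Set.range fun n => e n ω) := by
      refine ⟨0, ?_⟩; rintro _ ⟨n, rfl⟩; exact h0 n
    exact ⟨le_ciInf h0, fun n => ciInf_le hbd n, tendsto_atTop_ciInf hant hbd⟩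
  have hIzero : ∫⁻ ω, ENNReal.ofReal (I ω) ∂μ = 0 := by
    have hle : ∀ n, ∫⁻ ω, ENNReal.ofReal (I ω) ∂μ ≤ ENNReal.ofReal (∫ ω, e n ω ∂μ) := by
      intro n
      rw [ofReal_integral_eq_lintegral_ofReal (hint n) (hnonneg n)]
      refine lintegral_mono_ae ?_
      filter_upwards [hae] with ω hω
      exact ENNReal.ofReal_le_ofReal ((key ω hω.1 hω.2).2.1 n)
    have htends : Tendsto (fun n => ENNReal.ofReal (∫ ω, e n ω ∂μ)) atTop (𝓝 0) := by
      simpa using ENNReal.tendsto_ofReal hto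
    exact le_antisymm (ge_of_tendsto' htends hle) zero_le
  have hI0 : ∀ᵐ ω ∂μ, ENNReal.ofReal (I ω) = 0 :=
    (lintegral_eq_zero_iff hImeas.ennreal_ofReal).mp hIzero
  filter_upwards [hae, hI0] with ω hω hI0ω
  have h1 : I ω ≤ 0 := by simpa [ENNReal.ofReal_eq_zero] using hI0ω
  have h2 := key ω hω.1 hω.2
  have : I ω = 0 := le_antisymm h1 h2.1
  simpa [this] using h2.2.2


lemma aux_condexp_le {Ω : Type*} {m : MeasurableSpace Ω} (μ : Measure Ω) [IsProbabilityMeasure μ]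
    {X : Type*} [MeasurableSpace X] {W : Type*} [MeasurableSpace W]
    (μW : Measure W) [IsProbabilityMeasure μW]
    (Xs Xu : Set X)
    (f : X → W → X) (hf : Measurable (Function.uncurry f))
    (B : X → ℝ) (hBmeas : Measurable B)
    (hB0 : ∀ x ∈ Xs, 0 ≤ B x)
    (hBstep : ∀ x ∈ Xs \ Xu, ∫ w, B (f x w) ∂μW ≤ B x)
    (x : ℕ → Ω → X) (ℱ : Filtration ℕ m)
    (hmeasx : ∀ t, Measurable (x t))
    (hinv : ∀ t ω, x t ω ∈ Xs)
    (hintB : ∀ t, Integrable (fun ω => B (x t ω)) μ)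
    (hMarkov : ∀ (t : ℕ) (g : X → ℝ), Measurable g → (∃ C, ∀ y, |g y| ≤ C) →
      μ[(fun ω => g (x (t + 1) ω))|ℱ t] =ᵐ[μ]
        fun ω => ∫ w, g (f (x t ω) w) ∂μW)
    (t : ℕ) :
    ∀ᵐ ω ∂μ, x t ω ∉ Xu → (μ[(fun ω => B (x (t + 1) ω))|ℱ t]) ω ≤ B (x t ω) := by
  set ψ : Ω → ℝ := fun ω => B (x (t + 1) ω) with hψdef
  have hψ0 : ∀ ω, 0 ≤ ψ ω := fun ω => hB0 _ (hinv _ ω)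
  have hψint : Integrable ψ μ := hintB (t + 1)
  have hψmeas : Measurable ψ := hBmeas.comp (hmeasx (t + 1))
  -- measurability of w ↦ B (f a w)
  have hφmeas : ∀ a : X, Measurable fun w => B (f a w) := fun a =>
    hBmeas.comp (hf.comp measurable_prodMk_left)
  -- Step A: negative part vanishes a.e.
  have hnegae : ∀ᵐ ω ∂μ, ∀ᵐ w ∂μW, 0 ≤ B (f (x t ω) w) := by
    have hg₁meas : Measurable fun y => min 0 (max (B y) (-1)) :=
      measurable_const.min (hBmeas.max measurable_const)
    have hg₁bd : ∀ y, |min 0 (max (B y) (-1))| ≤ 1 := by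
      intro y
      rw [abs_le]
      constructor
      · exact le_min (by norm_num) (le_max_right _ _)
      · exact (min_le_left _ _).trans (by norm_num)
    have hM₁ := hMarkov t _ hg₁meas ⟨1, hg₁bd⟩
    have hzero : (fun ω => min 0 (max (B (x (t + 1) ω)) (-1))) = (0 : Ω → ℝ) := by
      funext ω
      have h0 : (0:ℝ) ≤ B (x (t + 1) ω) := hψ0 ω
      simp [max_eq_left (by linarith : (-1:ℝ) ≤ B (x (t + 1) ω)), min_eq_left h0]
    rw [hzero, condExp_zero] at hM₁
    filter_upwards [hM₁.symm] with ω hω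
    have hint0 : ∫ w, min 0 (max (B (f (x t ω) w)) (-1)) ∂μW = 0 := by
      simpa using hω
    have hnneg : 0 ≤ fun w => -(min 0 (max (B (f (x t ω) w)) (-1))) := by
      intro w
      simp only [Pi.zero_apply, neg_nonneg]
      exact min_le_left _ _
    have hintg : Integrable (fun w => -(min 0 (max (B (f (x t ω) w)) (-1)))) μW := by
      refine Integrable.mono' (integrable_const (1:ℝ))
        ((measurable_const.min ((hφmeas _).max measurable_const)).neg.aestronglyMeasurable) ?_
      filter_upwards with w
      rw [Real.norm_eq_abs, abs_neg]
      exact hg₁bd (f (x t ω) w)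
    have : ∫ w, -(min 0 (max (B (f (x t ω) w)) (-1))) ∂μW = 0 := by
      rw [integral_neg, hint0, neg_zero]
    have heq := (integral_eq_zero_iff_of_nonneg hnneg hintg).mp this
    filter_upwards [heq] with w hw
    have hmin : min 0 (max (B (f (x t ω) w)) (-1)) = 0 := by
      simpa [neg_eq_zero] using hw
    have hmax : (0:ℝ) ≤ max (B (f (x t ω) w)) (-1) := by
      by_contra h
      push_neg at h
      rw [min_eq_right h.le] at hmin
      linarith
    rcases le_max_iff.mp hmax with h | h
    · exact h
    · linarith
  -- Step B: Markov property for truncations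
  have hM₂ : ∀ n : ℕ, μ[(fun ω => min (ψ ω) (n:ℝ))|ℱ t] =ᵐ[μ]
      fun ω => ∫ w, min (max (B (f (x t ω) w)) 0) (n:ℝ) ∂μW := by
    intro n
    have hg₂meas : Measurable fun y => min (max (B y) 0) (n:ℝ) :=
      (hBmeas.max measurable_const).min measurable_const
    have hg₂bd : ∀ y, |min (max (B y) 0) (n:ℝ)| ≤ (n:ℝ) := by
      intro y
      rw [abs_le]
      refine ⟨le_min ?_ ?_, min_le_right _ _⟩
      · have h1 : (0:ℝ) ≤ (n:ℝ) := Nat.cast_nonneg n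
        have h2 : (0:ℝ) ≤ max (B y) 0 := le_max_right _ _
        linarith
      · have h1 : (0:ℝ) ≤ (n:ℝ) := Nat.cast_nonneg n
        linarith
    have hM := hMarkov t _ hg₂meas ⟨n, hg₂bd⟩
    have heq : (fun ω => min (max (B (x (t + 1) ω)) 0) (n:ℝ)) = fun ω => min (ψ ω) (n:ℝ) := by
      funext ω
      rw [max_eq_left (hψ0 ω)]
    rwa [heq] at hM
  -- integrability of truncations
  have hminmeas : ∀ n : ℕ, Measurable fun ω => min (ψ ω) (n:ℝ) := fun n =>
    hψmeas.min measurable_const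
  have hminint : ∀ n : ℕ, Integrable (fun ω => min (ψ ω) (n:ℝ)) μ := by
    intro n
    refine hψint.mono ((hminmeas n).aestronglyMeasurable) ?_
    filter_upwards with ω
    rw [Real.norm_eq_abs, Real.norm_eq_abs, abs_of_nonneg (le_min (hψ0 ω) (Nat.cast_nonneg n)),
      abs_of_nonneg (hψ0 ω)]
    exact min_le_left _ _
  -- Step C: conditional monotone convergence
  set L : Ω → ℝ := μ[ψ|ℱ t] with hLdef
  have hLint : Integrable L μ := integrable_condExp
  have hcn_int : ∀ n : ℕ, Integrable (μ[(fun ω => min (ψ ω) (n:ℝ))|ℱ t]) μ := fun n =>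
    integrable_condExp
  set e : ℕ → Ω → ℝ := fun n ω => L ω - (μ[(fun ω => min (ψ ω) (n:ℝ))|ℱ t]) ω with hedef
  have hcondmeas : ∀ n : ℕ, Measurable (μ[(fun ω => min (ψ ω) (n:ℝ))|ℱ t]) := fun n =>
    (stronglyMeasurable_condExp.mono (ℱ.le t)).measurable
  have hLmeas : Measurable L := (stronglyMeasurable_condExp.mono (ℱ.le t)).measurable
  have hCtends : ∀ᵐ ω ∂μ,
      Tendsto (fun n : ℕ => (μ[(fun ω => min (ψ ω) (n:ℝ))|ℱ t]) ω) atTop (𝓝 (L ω)) := by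
    have haux := aux_tendsto_ae_zero μ e
      (fun n => hLmeas.sub (hcondmeas n))
      (fun n => by
        have := condExp_mono (m := ℱ t) (hminint n) hψint
          (Filter.Eventually.of_forall fun ω => min_le_left _ _)
        filter_upwards [this] with ω hω
        simpa [hedef] using hω)
      (by
        rw [ae_all_iff]
        intro n
        have hmono : (fun ω => min (ψ ω) (n:ℝ)) ≤ᵐ[μ] fun ω => min (ψ ω) ((n+1:ℕ):ℝ) := by
          filter_upwards with ω
          exact min_le_min le_rfl (by exact_mod_cast Nat.le_succ n)
        have := condExp_mono (m := ℱ t) (hminint n) (hminint (n+1)) hmono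
        filter_upwards [this] with ω hω
        simp only [hedef]
        linarith)
      (fun n => hLint.sub (hcn_int n))
      (by
        have hinteq : ∀ n : ℕ, ∫ ω, e n ω ∂μ = ∫ ω, ψ ω ∂μ - ∫ ω, min (ψ ω) (n:ℝ) ∂μ := by
          intro n
          rw [hedef]
          rw [integral_sub hLint (hcn_int n), hLdef, integral_condExp (ℱ.le t),
            integral_condExp (ℱ.le t)]
        rw [show (fun n => ∫ ω, e n ω ∂μ) = fun n : ℕ => ∫ ω, ψ ω ∂μ - ∫ ω, min (ψ ω) (n:ℝ) ∂μ
          from funext hinteq]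
        have hDCT : Tendsto (fun n : ℕ => ∫ ω, min (ψ ω) (n:ℝ) ∂μ) atTop (𝓝 (∫ ω, ψ ω ∂μ)) := by
          refine tendsto_integral_of_dominated_convergence (fun ω => ψ ω)
            (fun n => (hminmeas n).aestronglyMeasurable) hψint ?_ ?_
          · intro n
            filter_upwards with ω
            rw [Real.norm_eq_abs, abs_of_nonneg (le_min (hψ0 ω) (Nat.cast_nonneg n))]
            exact min_le_left _ _
          · filter_upwards with ω
            refine tendsto_atTop_of_eventually_const (i₀ := ⌈ψ ω⌉₊) fun n hn => ?_
            exact min_eq_left ((Nat.le_ceil _).trans (by exact_mod_cast hn))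
        have := hDCT.const_sub (∫ ω, ψ ω ∂μ)
        simpa using this)
    filter_upwards [haux] with ω hω
    have : (fun n : ℕ => (μ[(fun ω => min (ψ ω) (n:ℝ))|ℱ t]) ω) = fun n : ℕ => L ω - e n ω := by
      funext n; simp [hedef]
    rw [this]
    simpa using (tendsto_const_nhds (x := L ω)).sub hω
  -- Step D: combine
  filter_upwards [hnegae, hCtends, ae_all_iff.2 hM₂] with ω hneg htend hM₂ω hXuω
  set φ : W → ℝ := fun w => B (f (x t ω) w) with hφdef
  have hφm : Measurable φ := hφmeas _
  set φp : W → ℝ := fun w => max (φ w) 0 with hφpdef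
  have hφpm : Measurable φp := hφm.max measurable_const
  set r : ℕ → ℝ := fun n => ∫ w, min (φp w) (n:ℝ) ∂μW with hrdef
  have hrint : ∀ n : ℕ, Integrable (fun w => min (φp w) (n:ℝ)) μW := by
    intro n
    refine Integrable.mono' (integrable_const (n:ℝ))
      ((hφpm.min measurable_const).aestronglyMeasurable) ?_
    filter_upwards with w
    rw [Real.norm_eq_abs, abs_of_nonneg (le_min (le_max_right _ _) (Nat.cast_nonneg n))]
    exact min_le_right _ _
  have hrtend : Tendsto r atTop (𝓝 (L ω)) := by
    have : r = fun n : ℕ => (μ[(fun ω => min (ψ ω) (n:ℝ))|ℱ t]) ω := by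
      funext n; exact (hM₂ω n).symm
    rw [this]
    exact htend
  have hrmono : Monotone r := by
    intro a b hab
    refine integral_mono (hrint a) (hrint b) fun w => ?_
    exact min_le_min le_rfl (Nat.mono_cast hab)
  have hrle : ∀ n, r n ≤ L ω := hrmono.ge_of_tendsto hrtend
  -- φp is integrable
  have hlint : ∫⁻ w, ENNReal.ofReal (φp w) ∂μW ≤ ENNReal.ofReal (L ω) := by
    have hpt : ∀ w, ENNReal.ofReal (φp w) = ⨆ n : ℕ, ENNReal.ofReal (min (φp w) (n:ℝ)) := by
      intro w
      refine le_antisymm ?_ (iSup_le fun n => ENNReal.ofReal_le_ofReal (min_le_left _ _))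
      refine le_iSup_of_le ⌈φp w⌉₊ ?_
      rw [min_eq_left (Nat.le_ceil _)]
    calc ∫⁻ w, ENNReal.ofReal (φp w) ∂μW
        = ∫⁻ w, ⨆ n : ℕ, ENNReal.ofReal (min (φp w) (n:ℝ)) ∂μW := by
          exact lintegral_congr fun w => hpt w
      _ = ⨆ n : ℕ, ∫⁻ w, ENNReal.ofReal (min (φp w) (n:ℝ)) ∂μW := by
          refine lintegral_iSup (fun n => (hφpm.min measurable_const).ennreal_ofReal) ?_
          intro a b hab w
          exact ENNReal.ofReal_le_ofReal (min_le_min le_rfl (by exact_mod_cast hab))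
      _ ≤ ENNReal.ofReal (L ω) := by
          refine iSup_le fun n => ?_
          rw [← ofReal_integral_eq_lintegral_ofReal (hrint n)
            (Filter.Eventually.of_forall fun w => le_min (le_max_right _ _) (Nat.cast_nonneg n))]
          exact ENNReal.ofReal_le_ofReal (hrle n)
  have hφpint : Integrable φp μW := by
    refine ⟨hφpm.aestronglyMeasurable, ?_⟩
    refine (hasFiniteIntegral_iff_ofReal
      (Filter.Eventually.of_forall fun w => le_max_right (φ w) 0)).mpr ?_
    exact lt_of_le_of_lt hlint ENNReal.ofReal_lt_top
  have hφeq : φ =ᵐ[μW] φp := by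
    filter_upwards [hneg] with w hw
    rw [hφpdef]
    simp only
    rw [max_eq_left hw]
  have hφint : Integrable φ μW := hφpint.congr hφeq.symm
  have hLle : L ω ≤ ∫ w, φp w ∂μW := by
    refine le_of_tendsto hrtend (Filter.Eventually.of_forall fun n => ?_)
    exact integral_mono (hrint n) hφpint fun w => min_le_left _ _
  have hfinal : ∫ w, φp w ∂μW ≤ B (x t ω) := by
    rw [← integral_congr_ae hφeq]
    exact hBstep _ ⟨hinv t ω, hXuω⟩
  exact le_trans hLle hfinal
theorem stmt_1 {Ω : Type*} {m : MeasurableSpace Ω} (μ : Measure Ω) [IsProbabilityMeasure μ]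
    {X : Type*} [MeasurableSpace X] {W : Type*} [MeasurableSpace W]
    (μW : Measure W) [IsProbabilityMeasure μW]
    (Xs X0 Xu : Set X) (hX0sub : X0 ⊆ Xs) (hXusub : Xu ⊆ Xs) (hXu : MeasurableSet Xu)
    (f : X → W → X) (hf : Measurable (Function.uncurry f))
    (B : X → ℝ) (hBmeas : Measurable B)
    (γ : ℝ) (hγ0 : 0 ≤ γ) (hγ1 : γ ≤ 1)
    -- barrier certificate conditions
    (hB0 : ∀ x ∈ Xs, 0 ≤ B x)
    (hBinit : ∀ x ∈ X0, B x ≤ γ)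
    (hBunsafe : ∀ x ∈ Xu, 1 ≤ B x)
    (hBstep : ∀ x ∈ Xs \ Xu, ∫ w, B (f x w) ∂μW ≤ B x)
    -- the solution process starting from x0 ∈ X0
    (x0 : X) (hx0 : x0 ∈ X0)
    (x : ℕ → Ω → X) (ℱ : Filtration ℕ m)
    (hadapted : ∀ t, Measurable[ℱ t] (x t))
    (hmeasx : ∀ t, Measurable (x t))
    (hinit : ∀ ω, x 0 ω = x0)
    (hinv : ∀ t ω, x t ω ∈ Xs)
    (hintB : ∀ t, Integrable (fun ω => B (x t ω)) μ)
    (hMarkov : ∀ (t : ℕ) (g : X → ℝ), Measurable g → (∃ C, ∀ y, |g y| ≤ C) →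
      μ[(fun ω => g (x (t + 1) ω))|ℱ t] =ᵐ[μ]
        fun ω => ∫ w, g (f (x t ω) w) ∂μW) :
    ENNReal.ofReal (1 - γ) ≤ μ {ω | ∀ t, x t ω ∉ Xu} := by
  by_cases hγlt : 1 ≤ γ
  · rw [ENNReal.ofReal_of_nonpos (by linarith)]
    exact zero_le
  push_neg at hγlt
  have hx0Xu : x0 ∉ Xu := fun h => absurd (hBinit x0 hx0) (by have := hBunsafe x0 h; linarith)
  -- the safe-up-to-time-t events
  set A : ℕ → Set Ω := fun t => {ω | ∀ s ≤ t, x s ω ∉ Xu} with hAdef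
  have hAeq : ∀ t, A t = ⋂ (s : ℕ) (_ : s ≤ t), (x s) ⁻¹' Xuᶜ := by
    intro t
    ext ω
    simp [hAdef, Set.mem_iInter]
  have hAmeasF : ∀ t, MeasurableSet[ℱ t] (A t) := by
    intro t
    rw [hAeq t]
    refine MeasurableSet.iInter fun s => MeasurableSet.iInter fun hs => ?_
    exact ℱ.mono hs _ (hadapted s hXu.compl)
  have hAmeas : ∀ t, MeasurableSet (A t) := fun t => ℱ.le t _ (hAmeasF t)
  -- key single-step inequality
  have hkey : ∀ t, ∫ ω in A t, B (x (t + 1) ω) ∂μ ≤ ∫ ω in A t, B (x t ω) ∂μ := by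
    intro t
    rw [← setIntegral_condExp (ℱ.le t) (hintB (t + 1)) (hAmeasF t)]
    refine setIntegral_mono_ae_restrict
      (integrable_condExp.integrableOn) ((hintB t).integrableOn) ?_
    rw [Filter.EventuallyLE, ae_restrict_iff' (hAmeas t)]
    filter_upwards [aux_condexp_le μ μW Xs Xu f hf B hBmeas hB0 hBstep x ℱ hmeasx hinv hintB
      hMarkov t] with ω hω hωA
    exact hω (hωA t le_rfl)
  -- induction: partial safety bounds
  have hind : ∀ T, (∫ ω in A T, B (x T ω) ∂μ) + (μ (A T)ᶜ).toReal ≤ γ := by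
    intro T
    induction T with
    | zero =>
      have hA0 : A 0 = Set.univ := by
        ext ω
        simp only [hAdef, Set.mem_setOf_eq, Set.mem_univ, iff_true]
        intro s hs
        rw [Nat.le_zero.mp hs, hinit ω]
        exact hx0Xu
      rw [hA0]
      simp only [Set.compl_univ, measure_empty, ENNReal.toReal_zero, add_zero]
      have heval : ∫ ω in Set.univ, B (x 0 ω) ∂μ = B x0 := by
        rw [Measure.restrict_univ]
        have : (fun ω => B (x 0 ω)) = fun _ => B x0 := by
          funext ω; rw [hinit ω]
        rw [this, integral_const]
        simp
      rw [heval]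
      exact hBinit x0 hx0
    | succ T ih =>
      set D : Set Ω := A T ∩ (x (T + 1)) ⁻¹' Xu with hDdef
      have hDmeas : MeasurableSet D := (hAmeas T).inter (hmeasx (T + 1) hXu)
      have hAsucc : A (T + 1) = A T ∩ (x (T + 1)) ⁻¹' Xuᶜ := by
        ext ω
        simp only [hAdef, Set.mem_setOf_eq, Set.mem_inter_iff, Set.mem_preimage,
          Set.mem_compl_iff]
        constructor
        · intro h
          exact ⟨fun s hs => h s (hs.trans (Nat.le_succ T)), h (T + 1) le_rfl⟩
        · rintro ⟨h1, h2⟩ s hs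
          rcases Nat.le_succ_iff.mp hs with h | h
          · exact h1 s h
          · rw [h]; exact h2
      have hsplit : A T = A (T + 1) ∪ D := by
        rw [hAsucc, hDdef]
        ext ω
        by_cases hω : x (T + 1) ω ∈ Xu <;>
          simp [hω, Set.mem_union, Set.mem_inter_iff, Set.mem_preimage]
      have hdisj : Disjoint (A (T + 1)) D := by
        rw [hAsucc, hDdef]
        rw [Set.disjoint_left]
        rintro ω ⟨-, h1⟩ ⟨-, h2⟩
        exact h1 h2
      -- measure of the complement splits
      have hcompl : μ (A (T + 1))ᶜ = μ (A T)ᶜ + μ D := by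
        have hset : (A (T + 1))ᶜ = (A T)ᶜ ∪ D := by
          rw [hAsucc, hDdef, Set.compl_inter]
          ext ω
          by_cases hA : ω ∈ A T <;>
            simp [hA, Set.mem_union, Set.mem_compl_iff, Set.mem_preimage]
        rw [hset, measure_union _ hDmeas]
        exact Set.disjoint_left.mpr fun ω h1 h2 => h1 h2.1
      have hDfin : μ D ≠ ⊤ := measure_ne_top μ D
      have hAcfin : μ (A T)ᶜ ≠ ⊤ := measure_ne_top μ _
      have htoReal : (μ (A (T + 1))ᶜ).toReal = (μ (A T)ᶜ).toReal + (μ D).toReal := by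
        rw [hcompl, ENNReal.toReal_add hAcfin hDfin]
      -- the indicator bound on D
      have hDbound : (μ D).toReal ≤ ∫ ω in D, B (x (T + 1) ω) ∂μ := by
        have := setIntegral_ge_of_const_le hDmeas hDfin
          (fun ω hω => hBunsafe _ hω.2) ((hintB (T + 1)).integrableOn)
        simp only [smul_eq_mul, mul_one, Measure.real] at this
        linarith [this]
      -- splitting the integral over A T
      have hsplitInt : ∫ ω in A (T + 1), B (x (T + 1) ω) ∂μ + ∫ ω in D, B (x (T + 1) ω) ∂μ =
          ∫ ω in A T, B (x (T + 1) ω) ∂μ := by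
        rw [hsplit]
        exact (setIntegral_union hdisj hDmeas ((hintB (T + 1)).integrableOn)
          ((hintB (T + 1)).integrableOn)).symm
      calc (∫ ω in A (T + 1), B (x (T + 1) ω) ∂μ) + (μ (A (T + 1))ᶜ).toReal
          = (∫ ω in A (T + 1), B (x (T + 1) ω) ∂μ) + (μ D).toReal + (μ (A T)ᶜ).toReal := by
            rw [htoReal]; ring
        _ ≤ (∫ ω in A (T + 1), B (x (T + 1) ω) ∂μ) + (∫ ω in D, B (x (T + 1) ω) ∂μ)
            + (μ (A T)ᶜ).toReal := by linarith
        _ = (∫ ω in A T, B (x (T + 1) ω) ∂μ) + (μ (A T)ᶜ).toReal := by rw [hsplitInt]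
        _ ≤ (∫ ω in A T, B (x T ω) ∂μ) + (μ (A T)ᶜ).toReal := by linarith [hkey T]
        _ ≤ γ := ih
  -- from the induction: uniform bound on hitting probabilities
  have hbd : ∀ T, μ (A T)ᶜ ≤ ENNReal.ofReal γ := by
    intro T
    have hnn : 0 ≤ ∫ ω in A T, B (x T ω) ∂μ :=
      setIntegral_nonneg (hAmeas T) fun ω _ => hB0 _ (hinv T ω)
    have h1 : (μ (A T)ᶜ).toReal ≤ γ := by linarith [hind T]
    calc μ (A T)ᶜ = ENNReal.ofReal ((μ (A T)ᶜ).toReal) :=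
          (ENNReal.ofReal_toReal (measure_ne_top μ _)).symm
      _ ≤ ENNReal.ofReal γ := ENNReal.ofReal_le_ofReal h1
  -- the safe set
  have hSeq : {ω | ∀ t, x t ω ∉ Xu} = ⋂ T, A T := by
    ext ω
    simp only [Set.mem_setOf_eq, Set.mem_iInter, hAdef]
    exact ⟨fun h T s _ => h s, fun h t => h t t le_rfl⟩
  have hSmeas : MeasurableSet {ω | ∀ t, x t ω ∉ Xu} := by
    rw [hSeq]; exact MeasurableSet.iInter hAmeas
  have hScompl : μ {ω | ∀ t, x t ω ∉ Xu}ᶜ ≤ ENNReal.ofReal γ := by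
    rw [hSeq, Set.compl_iInter]
    have hmono : Monotone fun T => (A T)ᶜ := by
      intro a b hab
      refine Set.compl_subset_compl.mpr fun ω hω s hs => hω s (hs.trans hab)
    rw [hmono.directed_le.measure_iUnion]
    exact iSup_le hbd
  have hadd : μ {ω | ∀ t, x t ω ∉ Xu} + μ {ω | ∀ t, x t ω ∉ Xu}ᶜ = 1 := by
    rw [measure_add_measure_compl hSmeas, measure_univ]
  rw [ENNReal.ofReal_sub _ hγ0, ENNReal.ofReal_one]
  rw [tsub_le_iff_right]
  calc (1 : ENNReal) = μ {ω | ∀ t, x t ω ∉ Xu} + μ {ω | ∀ t, x t ω ∉ Xu}ᶜ := hadd.symm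
    _ ≤ μ {ω | ∀ t, x t ω ∉ Xu} + ENNReal.ofReal γ := add_le_add_right hScompl _
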